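/- Let N ≥ W > L > 0 with 2L ≤ N, and let M = ⌈(N+W−1)/L⌉. There exist index sets K_0,…,K_{M−1} ⊆ {0,…,N−1} with Σ_{m=0}^{M−1} |K_m| = N+W−L, and a nonzero polynomial P in the 2(N+W) real variables given by the real and imaginary parts of the entries of (x,w) ∈ ℂ^N × ℂ^W, such that: for every pair (x,w) with P(x,w) ≠ 0 and every (x',w') ∈ ℂ^N × ℂ^W satisfying ŷ'[k,m] = ŷ[k,m] for all m = 0,…,M−1 and all k ∈ K_m, there exist nonzero complex numbers λ = (λ_0,…,λ_{L−1}) with (x',w') = λ∘(x,w). That is, a generic pair (x,w) is uniquely determined, modulo the scaling ambiguities, from N+W−L blind STFT measurements. -/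

import Mathlib

open Complex BigOperators

/-- Extension of a finite vector `w ∈ ℂ^W` to `ℤ` by zero outside `{0,…,W−1}`. -/
noncomputable def zext {W : ℕ} (w : Fin W → ℂ) (j : ℤ) : ℂ :=
  if h : 0 ≤ j ∧ j < (W : ℤ) then w ⟨j.toNat, by omega⟩ else 0

/-- The blind short-time Fourier transform
`ŷ[k,m] = Σ_{n=0}^{N−1} x[n]·w[mL−n]·e^{−2πikn/N}`. -/
noncomputable def stft {N W : ℕ} (x : Fin N → ℂ) (w : Fin W → ℂ)
    (L : ℕ) (k : ℤ) (m : ℕ) : ℂ :=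
  ∑ n : Fin N, x n * zext w ((m : ℤ) * L - (n : ℕ)) *
    Complex.exp (-(2 * (Real.pi : ℂ) * Complex.I * (k : ℂ) * ((n : ℕ) : ℂ)) / (N : ℂ))

/-- The `2(N+W)` real variables of a pair `(x,w) ∈ ℂ^N × ℂ^W`:
real and imaginary parts of all the entries. -/
noncomputable def realVars {N W : ℕ} (x : Fin N → ℂ) (w : Fin W → ℂ) :
    (Fin N ⊕ Fin W) × Bool → ℝ
  | (Sum.inl n, false) => (x n).re
  | (Sum.inl n, true) => (x n).im
  | (Sum.inr n, false) => (w n).re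
  | (Sum.inr n, true) => (w n).im

section BlindStftAux

lemma mod_compl {L a b : ℕ} (hL : 0 < L) (h : (a + b) % L = 0) :
    (L - b % L) % L = a % L := by
  have ha : a % L < L := Nat.mod_lt _ hL
  have hb : b % L < L := Nat.mod_lt _ hL
  have h2 : (a % L + b % L) % L = 0 := by rw [Nat.add_mod] at h; exact h
  rcases Nat.lt_or_ge (a % L + b % L) L with h3 | h3
  · rw [Nat.mod_eq_of_lt h3] at h2
    have hb0 : b % L = 0 := by omega
    have ha0 : a % L = 0 := by omega
    simp [hb0, ha0, Nat.mod_self]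
  · have h4 : a % L + b % L - L < L := by omega
    have h5 : (a % L + b % L) % L = a % L + b % L - L := by
      rw [Nat.mod_eq_sub_mod h3, Nat.mod_eq_of_lt h4]
    have h6 : a % L + b % L = L := by omega
    have h7 : L - b % L = a % L := by omega
    rw [h7, Nat.mod_eq_of_lt ha]

lemma exists_window {L : ℕ} (hL : 0 < L) (n : ℕ) : ∃ m : ℕ, n ≤ m * L ∧ m * L < n + L := by
  have hr : n % L < L := Nat.mod_lt _ hL
  have h2 : n / L * L + n % L = n := Nat.div_add_mod' n L
  rcases eq_or_ne (n % L) 0 with h0 | h0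
  · exact ⟨n / L, by linarith, by linarith⟩
  · refine ⟨n / L + 1, ?_, ?_⟩ <;> · rw [add_mul, one_mul]; have := Nat.pos_of_ne_zero h0; linarith

lemma window_unique {L : ℕ} (hL : 0 < L) {n m m' : ℕ}
    (h1 : n ≤ m * L) (h2 : m * L < n + L) (h3 : n ≤ m' * L) (h4 : m' * L < n + L) : m = m' := by
  have ha : m * L < (m' + 1) * L := by rw [add_mul, one_mul]; linarith
  have hb : m' * L < (m + 1) * L := by rw [add_mul, one_mul]; linarith
  have ha' : m < m' + 1 := lt_of_mul_lt_mul_right ha (Nat.zero_le L)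
  have hb' : m' < m + 1 := lt_of_mul_lt_mul_right hb (Nat.zero_le L)
  omega

lemma mulL_add_unique {L : ℕ} (hL : 0 < L) {m m' a a' : ℕ} (h : m * L + a = m' * L + a')
    (ha : a < L) (ha' : a' < L) : m = m' ∧ a = a' := by
  have e1 : (L * m + a) / L = m := by rw [Nat.mul_add_div hL, Nat.div_eq_of_lt ha, add_zero]
  have e2 : (L * m' + a') / L = m' := by rw [Nat.mul_add_div hL, Nat.div_eq_of_lt ha', add_zero]
  have hmm : m = m' := by rw [← e1, ← e2, mul_comm L m, mul_comm L m', h]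
  refine ⟨hmm, ?_⟩
  subst hmm
  omega

lemma le_ceil_mul {L a : ℕ} (hL : 0 < L) : a ≤ (a + L - 1) / L * L := by
  have h2 : (a + L - 1) / L * L + (a + L - 1) % L = a + L - 1 := Nat.div_add_mod' _ _
  have h3 : (a + L - 1) % L < L := Nat.mod_lt _ hL
  have h6 : (a + L - 1) % L ≤ L - 1 := Nat.le_pred_of_lt h3
  have h7 : a + L - 1 ≥ a + (L - 1) := by omega
  linarith

lemma lt_of_mulL_lt {L m M : ℕ} (h : m * L < M * L) : m < M :=
  lt_of_mul_lt_mul_right h (Nat.zero_le L)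

lemma exp_inj_aux {N : ℕ} (hN : 0 < N) {a b : ℕ} (ha : a < N) (hb : b < N)
    (h : Complex.exp (-(2 * (Real.pi : ℂ) * Complex.I * a) / N)
       = Complex.exp (-(2 * (Real.pi : ℂ) * Complex.I * b) / N)) : a = b := by
  rw [Complex.exp_eq_exp_iff_exists_int] at h
  obtain ⟨k, hk⟩ := h
  have hNne : (N : ℂ) ≠ 0 := Nat.cast_ne_zero.mpr hN.ne'
  have hpi : (Real.pi : ℂ) ≠ 0 := by
    exact_mod_cast Complex.ofReal_ne_zero.mpr Real.pi_ne_zero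
  have h2 : ((b : ℂ) - a) = k * N := by
    have h3 : (2 * (Real.pi : ℂ) * Complex.I) * (((b : ℂ) - a - k * N) * N) = 0 := by
      field_simp at hk
      linear_combination (2 * (Real.pi : ℂ) * Complex.I * N) * hk
    rcases mul_eq_zero.mp h3 with h4 | h4
    · exact absurd h4 (by
        simp [Complex.I_ne_zero, hpi, Complex.ofReal_ne_zero, Real.pi_ne_zero])
    · rcases mul_eq_zero.mp h4 with h5 | h5
      · linear_combination h5
      · exact absurd h5 hNne
  have h5 : (b : ℤ) - a = k * N := by exact_mod_cast h2
  have h6 : k < 1 := by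
    by_contra hcon
    push_neg at hcon
    have : (N : ℤ) ≤ k * N := le_mul_of_one_le_left (by positivity) hcon
    omega
  have h7 : -1 < k := by
    by_contra hcon
    push_neg at hcon
    have : k * N ≤ (-1) * N := mul_le_mul_of_nonneg_right (by omega) (by positivity)
    omega
  have hk0 : k = 0 := by omega
  rw [hk0] at h5
  omega

lemma exp_pow_eq {N : ℕ} (kk n : ℕ) :
    Complex.exp (-(2 * (Real.pi : ℂ) * Complex.I * kk * n) / N)
      = Complex.exp (-(2 * (Real.pi : ℂ) * Complex.I * n) / N) ^ kk := by
  rw [← Complex.exp_nat_mul]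
  congr 1
  ring

lemma window_solve {N : ℕ} (T : Finset (Fin N)) (d : Fin N → ℂ)
    (hd0 : ∀ n, n ∉ T → d n = 0)
    (hsum : ∀ kk : ℕ, kk < T.card →
      ∑ n : Fin N, d n * Complex.exp (-(2 * (Real.pi : ℂ) * Complex.I * kk * n) / N) = 0) :
    ∀ n, d n = 0 := by
  intro n₀
  by_cases hn₀ : n₀ ∈ T
  swap
  · exact hd0 n₀ hn₀
  have hN : 0 < N := n₀.pos
  let e : Fin T.card ≃ {x // x ∈ T} := T.equivFin.symm
  set E : Fin N → ℂ := fun n => Complex.exp (-(2 * (Real.pi : ℂ) * Complex.I * n) / N) with hE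
  let v : Fin T.card → ℂ := fun i => E ((e i : Fin N))
  have hv : Function.Injective v := by
    intro i j hij
    apply e.injective
    apply Subtype.ext
    apply Fin.ext
    exact exp_inj_aux hN (e i).1.isLt (e j).1.isLt hij
  let u : Fin T.card → ℂ := fun i => d (e i)
  have key : ∀ k : Fin T.card, ∑ i, v i ^ (k : ℕ) * u i = 0 := by
    intro k
    have h1 : ∑ i, v i ^ (k : ℕ) * u i = ∑ t : {x // x ∈ T}, E (t : Fin N) ^ (k : ℕ) * d t :=
      Equiv.sum_comp e (fun t => E (t : Fin N) ^ (k : ℕ) * d t)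
    rw [h1, Finset.sum_coe_sort T (fun t => E t ^ (k : ℕ) * d t)]
    have h2 : ∑ t ∈ T, E t ^ (k : ℕ) * d t = ∑ t : Fin N, E t ^ (k : ℕ) * d t := by
      apply Finset.sum_subset (Finset.subset_univ T)
      intro t _ ht
      rw [hd0 t ht, mul_zero]
    rw [h2]
    have h3 := hsum (k : ℕ) k.isLt
    rw [← h3]
    apply Finset.sum_congr rfl
    intro t _
    rw [exp_pow_eq, mul_comm]
  let A : Matrix (Fin T.card) (Fin T.card) ℂ := Matrix.of fun k i => v i ^ (k : ℕ)
  have hA : A.mulVec u = 0 := by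
    funext k
    simpa [A, Matrix.mulVec, dotProduct] using key k
  have hdet : A.det ≠ 0 := by
    have hAv : A = Matrix.transpose (Matrix.vandermonde v) := by
      ext k i
      simp [A, Matrix.vandermonde, Matrix.transpose_apply]
    rw [hAv, Matrix.det_transpose, Matrix.det_vandermonde]
    apply Finset.prod_ne_zero_iff.mpr
    intro i _
    apply Finset.prod_ne_zero_iff.mpr
    intro j hj
    have : v j ≠ v i := fun hvij => (Finset.mem_Ioi.mp hj).ne' (hv hvij)
    exact sub_ne_zero_of_ne this
  have hu : u = 0 := Matrix.eq_zero_of_mulVec_eq_zero hdet hA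
  have h9 : u (e.symm ⟨n₀, hn₀⟩) = 0 := congrFun hu (e.symm ⟨n₀, hn₀⟩)
  simpa [u, Equiv.apply_symm_apply] using h9

lemma zext_coe {W : ℕ} (w : Fin W → ℂ) (j : Fin W) : zext w ((j : ℕ) : ℤ) = w j := by
  have h : (0 : ℤ) ≤ ((j : ℕ) : ℤ) ∧ ((j : ℕ) : ℤ) < (W : ℤ) := by
    constructor
    · exact Int.natCast_nonneg _
    · exact_mod_cast j.isLt
  rw [zext, dif_pos h]
  congr 1

lemma zext_zero_of {W : ℕ} (w : Fin W → ℂ) (z : ℤ) (h : z < 0 ∨ (W : ℤ) ≤ z) : zext w z = 0 := by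
  rw [zext, dif_neg]
  omega

lemma solveA {l a b c : ℂ} (hl : l ≠ 0) (ha : a ≠ 0) (h : l * a * b = a * c) : b = l⁻¹ * c := by
  have h1 : l * b = c := mul_left_cancel₀ ha (by linear_combination h)
  rw [← h1, ← mul_assoc, inv_mul_cancel₀ hl, one_mul]

lemma solveB {l a b c : ℂ} (hl : l ≠ 0) (ha : a ≠ 0) (h : b * (l⁻¹ * a) = c * a) : b = l * c := by
  have h1 : b * l⁻¹ = c := mul_right_cancel₀ ha (by linear_combination h)
  rw [← h1, mul_comm b, ← mul_assoc, mul_inv_cancel₀ hl, one_mul]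

end BlindStftAux

/-- a generic pair `(x,w)` is uniquely determined, modulo the
scaling ambiguities, from `N+W−L` blind STFT measurements, for suitably
chosen frequency sets `K_0,…,K_{M−1}`. -/
theorem blind_stft_uniqueness_optimal
    {N W L : ℕ} (hL : 0 < L) (hLW : L < W) (hWN : W ≤ N) (h2L : 2 * L ≤ N) :
    ∃ (K : Fin ((N + W - 1 + L - 1) / L) → Finset (Fin N))
      (P : MvPolynomial ((Fin N ⊕ Fin W) × Bool) ℝ),
      P ≠ 0 ∧
      (∑ m, (K m).card) = N + W - L ∧
      ∀ (x : Fin N → ℂ) (w : Fin W → ℂ),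
        MvPolynomial.eval (realVars x w) P ≠ 0 →
        ∀ (x' : Fin N → ℂ) (w' : Fin W → ℂ),
          (∀ m : Fin ((N + W - 1 + L - 1) / L), ∀ k ∈ K m,
            stft x' w' L ((k : ℕ) : ℤ) (m : ℕ) = stft x w L ((k : ℕ) : ℤ) (m : ℕ)) →
          ∃ lam : Fin L → ℂ, (∀ j, lam j ≠ 0) ∧
            (∀ n : Fin N, x' n = lam ⟨(n : ℕ) % L, Nat.mod_lt _ hL⟩ * x n) ∧
            (∀ n : Fin W, w' n = (lam ⟨(L - (n : ℕ) % L) % L, Nat.mod_lt _ hL⟩)⁻¹ * w n) := by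
  classical
  set Mn := (N + W - 1 + L - 1) / L with hMndef
  have hLN : L ≤ N := le_trans (le_of_lt hLW) hWN
  have hLW' : L ≤ W := le_of_lt hLW
  have hN0 : 0 < N := lt_of_lt_of_le (lt_of_le_of_lt (Nat.zero_le L) hLW) hWN
  have hW0 : 0 < W := lt_of_le_of_lt (Nat.zero_le L) hLW
  have hLltN : L < N := by omega
  have hMnL : N + W - 1 ≤ Mn * L := le_ceil_mul hL
  have hMn2 : 2 < Mn := by
    have h1 : 2 * L < 3 * L := by omega
    have h2 : 3 * L ≤ N + W - 1 := by omega
    exact lt_of_mulL_lt (lt_of_lt_of_le h1 (le_trans h2 hMnL))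
  -- index sets
  set pB : ℕ → ℕ → Prop := fun m n => n ≤ m * L ∧ m * L < n + L with hpBdef
  set pA : ℕ → ℕ → Prop := fun m n => n + L ≤ m * L ∧ m * L ≤ n + (W - 1) ∧ n < L with hpAdef
  set Bs : ℕ → Finset (Fin N) := fun m => Finset.univ.filter (fun n : Fin N => pB m (n : ℕ)) with hBsdef
  set As : ℕ → Finset (Fin N) := fun m => Finset.univ.filter (fun n : Fin N => pA m (n : ℕ)) with hAsdef
  set Ts : ℕ → Finset (Fin N) := fun m => Bs m ∪ As m with hTsdef
  have hTsN : ∀ m, (Ts m).card ≤ N := by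
    intro m
    calc (Ts m).card ≤ (Finset.univ : Finset (Fin N)).card := Finset.card_le_univ _
    _ = N := Finset.card_fin N
  have hmemT : ∀ (m : ℕ) (n : Fin N), n ∈ Ts m ↔
      (((n : ℕ) ≤ m * L ∧ m * L < (n : ℕ) + L) ∨
        ((n : ℕ) + L ≤ m * L ∧ m * L ≤ (n : ℕ) + (W - 1) ∧ (n : ℕ) < L)) := by
    intro m n
    simp [hTsdef, hBsdef, hAsdef, hpBdef, hpAdef, Finset.mem_union, Finset.mem_filter]
  refine ⟨fun m => (Finset.range ((Ts (m : ℕ)).card)).attachFin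
      (fun i hi => lt_of_lt_of_le (Finset.mem_range.mp hi) (hTsN _)), ?_, ?_, ?_, ?_⟩
  · -- P
    exact (∏ r : Fin L, (MvPolynomial.X (Sum.inl ⟨(r : ℕ), lt_of_lt_of_le r.isLt hLN⟩, false) ^ 2
          + MvPolynomial.X (Sum.inl ⟨(r : ℕ), lt_of_lt_of_le r.isLt hLN⟩, true) ^ 2))
        * (∏ r : Fin L, (MvPolynomial.X (Sum.inr ⟨(r : ℕ), lt_of_lt_of_le r.isLt hLW'⟩, false) ^ 2
          + MvPolynomial.X (Sum.inr ⟨(r : ℕ), lt_of_lt_of_le r.isLt hLW'⟩, true) ^ 2))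
  · -- P ≠ 0
    intro h0
    have hc := congrArg (MvPolynomial.eval (fun _ => (1 : ℝ))) h0
    simp only [map_mul, map_prod, map_add, map_pow, MvPolynomial.eval_X, map_zero] at hc
    norm_num at hc
  · -- card count
    have h1 : ∀ m : Fin Mn, ((Finset.range ((Ts (m : ℕ)).card)).attachFin
        (fun i hi => lt_of_lt_of_le (Finset.mem_range.mp hi) (hTsN _))).card = (Ts (m : ℕ)).card :=
      fun m => by rw [Finset.card_attachFin, Finset.card_range]
    rw [Finset.sum_congr rfl (fun m _ => h1 m)]
    have hdisj : ∀ m : ℕ, Disjoint (Bs m) (As m) := by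
      intro m
      rw [Finset.disjoint_left]
      intro n hnB hnA
      simp only [hBsdef, hAsdef, hpBdef, hpAdef, Finset.mem_filter, Finset.mem_univ,
        true_and] at hnB hnA
      omega
    have hTcard : ∀ m : ℕ, (Ts m).card = (Bs m).card + (As m).card := by
      intro m
      have : Ts m = Bs m ∪ As m := by rw [hTsdef]
      rw [this]
      exact Finset.card_union_of_disjoint (hdisj m)
    rw [Finset.sum_congr rfl (fun (m : Fin Mn) _ => hTcard (m : ℕ)), Finset.sum_add_distrib]
    have hB : ∑ m : Fin Mn, (Bs (m : ℕ)).card = N := by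
      rw [← Finset.card_sigma]
      have hgoal : (Finset.univ.sigma fun m : Fin Mn => Bs (m : ℕ)).card
          = (Finset.univ : Finset (Fin N)).card := by
        apply Finset.card_bij (fun (p : Σ _ : Fin Mn, Fin N) _ => p.2)
        · intro a _; exact Finset.mem_univ _
        · rintro ⟨m₁, n₁⟩ h₁ ⟨m₂, n₂⟩ h₂ h
          simp only [Finset.mem_sigma, Finset.mem_univ, true_and, hBsdef, hpBdef,
            Finset.mem_filter] at h₁ h₂
          cases h
          have hm : m₁ = m₂ := Fin.ext (window_unique hL h₁.1 h₁.2 h₂.1 h₂.2)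
          rw [hm]
        · intro b _
          obtain ⟨m, hm1, hm2⟩ := exists_window hL (b : ℕ)
          have h9 : (b : ℕ) + L < N + W - 1 := by have := b.isLt; omega
          have hmMn : m < Mn := lt_of_mulL_lt (lt_of_lt_of_le (lt_trans hm2 h9) hMnL)
          refine ⟨⟨⟨m, hmMn⟩, b⟩, ?_, rfl⟩
          simp only [Finset.mem_sigma, Finset.mem_univ, true_and, hBsdef, hpBdef,
            Finset.mem_filter]
          exact ⟨hm1, hm2⟩
      rw [hgoal, Finset.card_fin]
    have hA : ∑ m : Fin Mn, (As (m : ℕ)).card = W - L := by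
      rw [← Finset.card_sigma]
      have : (Finset.Ico L W).card = W - L := Nat.card_Ico L W
      rw [← this]
      apply Finset.card_bij (fun (p : Σ _ : Fin Mn, Fin N) _ => (p.1 : ℕ) * L - (p.2 : ℕ))
      · rintro ⟨m, n⟩ hp
        simp only [Finset.mem_sigma, Finset.mem_univ, true_and, hAsdef, hpAdef,
          Finset.mem_filter] at hp
        dsimp only
        rw [Finset.mem_Ico]
        omega
      · rintro ⟨m₁, n₁⟩ h₁ ⟨m₂, n₂⟩ h₂ h
        simp only [Finset.mem_sigma, Finset.mem_univ, true_and, hAsdef, hpAdef,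
          Finset.mem_filter] at h₁ h₂
        dsimp only at h
        have e₁ : (m₁ : ℕ) * L = ((m₁ : ℕ) * L - (n₁ : ℕ)) + (n₁ : ℕ) := by omega
        have e₂ : (m₂ : ℕ) * L = ((m₂ : ℕ) * L - (n₂ : ℕ)) + (n₂ : ℕ) := by omega
        have heq : (m₁ : ℕ) * L + (n₂ : ℕ) = (m₂ : ℕ) * L + (n₁ : ℕ) := by omega
        obtain ⟨hmm, hnn⟩ := mulL_add_unique hL heq h₂.2.2 h₁.2.2
        have hm : m₁ = m₂ := Fin.ext hmm
        have hn : n₁ = n₂ := Fin.ext hnn.symm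
        rw [hm, hn]
      · intro j hj
        rw [Finset.mem_Ico] at hj
        obtain ⟨m, hm1, hm2⟩ := exists_window hL j
        have h9 : j + L < N + W - 1 := by omega
        have hmMn : m < Mn := lt_of_mulL_lt (lt_of_lt_of_le (lt_trans hm2 h9) hMnL)
        have hnN : m * L - j < N := by omega
        refine ⟨⟨⟨m, hmMn⟩, ⟨m * L - j, hnN⟩⟩, ?_, by dsimp only; omega⟩
        simp only [Finset.mem_sigma, Finset.mem_univ, true_and, hAsdef, hpAdef,
          Finset.mem_filter]
        refine ⟨by omega, by omega, by omega⟩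
    rw [hB, hA]
    omega
  · -- main implication
    intro x w hP x' w' hmeas
    have hx0 : ∀ r : Fin L, x ⟨(r : ℕ), lt_of_lt_of_le r.isLt hLN⟩ ≠ 0 := by
      intro r hxr
      apply hP
      simp only [map_mul, map_prod, map_add, map_pow, MvPolynomial.eval_X]
      apply mul_eq_zero_of_left
      apply Finset.prod_eq_zero (Finset.mem_univ r)
      rw [show realVars x w (Sum.inl ⟨(r : ℕ), lt_of_lt_of_le r.isLt hLN⟩, false)
            = (x ⟨(r : ℕ), lt_of_lt_of_le r.isLt hLN⟩).re from rfl,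
          show realVars x w (Sum.inl ⟨(r : ℕ), lt_of_lt_of_le r.isLt hLN⟩, true)
            = (x ⟨(r : ℕ), lt_of_lt_of_le r.isLt hLN⟩).im from rfl, hxr]
      simp
    have hw0 : ∀ r : Fin L, w ⟨(r : ℕ), lt_of_lt_of_le r.isLt hLW'⟩ ≠ 0 := by
      intro r hwr
      apply hP
      simp only [map_mul, map_prod, map_add, map_pow, MvPolynomial.eval_X]
      apply mul_eq_zero_of_right
      apply Finset.prod_eq_zero (Finset.mem_univ r)
      rw [show realVars x w (Sum.inr ⟨(r : ℕ), lt_of_lt_of_le r.isLt hLW'⟩, false)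
            = (w ⟨(r : ℕ), lt_of_lt_of_le r.isLt hLW'⟩).re from rfl,
          show realVars x w (Sum.inr ⟨(r : ℕ), lt_of_lt_of_le r.isLt hLW'⟩, true)
            = (w ⟨(r : ℕ), lt_of_lt_of_le r.isLt hLW'⟩).im from rfl, hwr]
      simp
    set lam : Fin L → ℂ := fun r =>
      x' ⟨(r : ℕ), lt_of_lt_of_le r.isLt hLN⟩ * (x ⟨(r : ℕ), lt_of_lt_of_le r.isLt hLN⟩)⁻¹
      with hlamdef
    have hlamdefx : ∀ r : Fin L,
        x' ⟨(r : ℕ), lt_of_lt_of_le r.isLt hLN⟩ = lam r * x ⟨(r : ℕ), lt_of_lt_of_le r.isLt hLN⟩ := by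
      intro r
      rw [hlamdef]
      dsimp only
      rw [mul_assoc, inv_mul_cancel₀ (hx0 r), mul_one]
    set dd : ℕ → Fin N → ℂ := fun m n =>
      x' n * zext w' ((m : ℤ) * L - (n : ℕ)) - x n * zext w ((m : ℤ) * L - (n : ℕ)) with hdddef
    have hwin : ∀ m : ℕ, m < Mn → (∀ n : Fin N, n ∉ Ts m → dd m n = 0) → ∀ n : Fin N, dd m n = 0 := by
      intro m hm hleft
      apply window_solve (Ts m) (dd m) hleft
      intro kk hkk
      have hkN : kk < N := lt_of_lt_of_le hkk (hTsN m)
      have hkmem : (⟨kk, hkN⟩ : Fin N) ∈ (Finset.range ((Ts ((⟨m, hm⟩ : Fin Mn) : ℕ)).card)).attachFin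
          (fun i hi => lt_of_lt_of_le (Finset.mem_range.mp hi) (hTsN _)) := by
        rw [Finset.mem_attachFin]
        exact Finset.mem_range.mpr hkk
      have hmeq : stft x' w' L (kk : ℤ) m = stft x w L (kk : ℤ) m :=
        hmeas ⟨m, hm⟩ ⟨kk, hkN⟩ hkmem
      have hsplit : ∑ n : Fin N, dd m n
            * Complex.exp (-(2 * (Real.pi : ℂ) * Complex.I * kk * n) / N)
          = stft x' w' L (kk : ℤ) m - stft x w L (kk : ℤ) m := by
        rw [stft, stft, ← Finset.sum_sub_distrib]
        apply Finset.sum_congr rfl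
        intro n _
        simp only [hdddef]
        push_cast
        ring
      rw [hsplit, hmeq, sub_self]
    have hPROD : ∀ m : ℕ, m < Mn → (∀ n : Fin N, n ∉ Ts m → dd m n = 0) →
        ∀ (n : Fin N) (j : Fin W), (n : ℕ) + (j : ℕ) = m * L → x' n * w' j = x n * w j := by
      intro m hm hleft n j hnj
      have hd := hwin m hm hleft n
      have hz : (m : ℤ) * L - ((n : ℕ) : ℤ) = ((j : ℕ) : ℤ) := by
        have hc : ((n : ℕ) : ℤ) + ((j : ℕ) : ℤ) = ((m * L : ℕ) : ℤ) := by exact_mod_cast hnj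
        rw [Nat.cast_mul] at hc
        linarith
      simp only [hdddef] at hd
      rw [hz, zext_coe, zext_coe] at hd
      exact sub_eq_zero.mp hd
    have hddzero : ∀ (m : ℕ) (n : Fin N), (m * L < (n : ℕ) ∨ (n : ℕ) + W ≤ m * L) → dd m n = 0 := by
      intro m n hcase
      have hz : (m : ℤ) * L - ((n : ℕ) : ℤ) < 0 ∨ (W : ℤ) ≤ (m : ℤ) * L - ((n : ℕ) : ℤ) := by
        rcases hcase with h | h
        · left
          have hc : ((m * L : ℕ) : ℤ) < ((n : ℕ) : ℤ) := by exact_mod_cast h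
          rw [Nat.cast_mul] at hc
          linarith
        · right
          have hc : ((n : ℕ) : ℤ) + (W : ℤ) ≤ ((m * L : ℕ) : ℤ) := by exact_mod_cast h
          rw [Nat.cast_mul] at hc
          linarith
      simp only [hdddef]
      rw [zext_zero_of w' _ hz, zext_zero_of w _ hz, mul_zero, mul_zero, sub_self]
    -- base windows
    have hm0 : (0 : ℕ) < Mn := by omega
    have hm1 : (1 : ℕ) < Mn := by omega
    have hleft0 : ∀ n : Fin N, n ∉ Ts 0 → dd 0 n = 0 := by
      intro n hn
      rw [hmemT] at hn
      apply hddzero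
      left
      omega
    have hleft1 : ∀ n : Fin N, n ∉ Ts 1 → dd 1 n = 0 := by
      intro n hn
      rw [hmemT] at hn
      apply hddzero
      left
      omega
    have hprod0 := hPROD 0 hm0 hleft0
    have hprod1 := hPROD 1 hm1 hleft1
    have hx00 : x ⟨0, hN0⟩ ≠ 0 := hx0 ⟨0, hL⟩
    have hw00 : w ⟨0, hW0⟩ ≠ 0 := hw0 ⟨0, hL⟩
    have p00 := hprod0 ⟨0, hN0⟩ ⟨0, hW0⟩ (by dsimp only; omega)
    have e0 : x' ⟨0, hN0⟩ = lam ⟨0, hL⟩ * x ⟨0, hN0⟩ := hlamdefx ⟨0, hL⟩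
    rw [e0] at p00
    have hlam0ne : lam ⟨0, hL⟩ ≠ 0 := by
      intro hc
      rw [hc, zero_mul, zero_mul] at p00
      exact (mul_ne_zero hx00 hw00) p00.symm
    have hw'0 : w' ⟨0, hW0⟩ = (lam ⟨0, hL⟩)⁻¹ * w ⟨0, hW0⟩ := solveA hlam0ne hx00 p00
    have p1L := hprod1 ⟨0, hN0⟩ ⟨L, hLW⟩ (by dsimp only; omega)
    rw [e0] at p1L
    have hw'L : w' ⟨L, hLW⟩ = (lam ⟨0, hL⟩)⁻¹ * w ⟨L, hLW⟩ := solveA hlam0ne hx00 p1L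
    have p1x := hprod1 ⟨L, hLltN⟩ ⟨0, hW0⟩ (by dsimp only; omega)
    rw [hw'0] at p1x
    have hx'L : x' ⟨L, hLltN⟩ = lam ⟨0, hL⟩ * x ⟨L, hLltN⟩ := solveB hlam0ne hw00 p1x
    have pmid : ∀ r : Fin L, 0 < (r : ℕ) → lam r ≠ 0 ∧
        w' ⟨L - (r : ℕ), lt_of_le_of_lt (Nat.sub_le L _) hLW⟩
          = (lam r)⁻¹ * w ⟨L - (r : ℕ), lt_of_le_of_lt (Nat.sub_le L _) hLW⟩ := by
      intro r hr
      have hrL : (r : ℕ) < L := r.isLt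
      have p1r := hprod1 ⟨(r : ℕ), lt_of_lt_of_le r.isLt hLN⟩
        ⟨L - (r : ℕ), lt_of_le_of_lt (Nat.sub_le L _) hLW⟩ (by dsimp only; omega)
      rw [hlamdefx r] at p1r
      have hwr : w ⟨L - (r : ℕ), lt_of_le_of_lt (Nat.sub_le L _) hLW⟩ ≠ 0 := by
        have hjL : L - (r : ℕ) < L := by omega
        exact hw0 ⟨L - (r : ℕ), hjL⟩
      have hlne : lam r ≠ 0 := by
        intro hc
        rw [hc, zero_mul, zero_mul] at p1r
        exact (mul_ne_zero (hx0 r) hwr) p1r.symm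
      exact ⟨hlne, solveA hlne (hx0 r) p1r⟩
    have hlamne : ∀ r : Fin L, lam r ≠ 0 := by
      intro r
      rcases Nat.eq_zero_or_pos (r : ℕ) with h0 | h0
      · have hr : r = ⟨0, hL⟩ := Fin.ext h0
        rw [hr]
        exact hlam0ne
      · exact (pmid r h0).1
    -- base invariants (after window 1)
    have hbx : ∀ n : Fin N, (n : ℕ) ≤ 1 * L → x' n = lam ⟨(n : ℕ) % L, Nat.mod_lt _ hL⟩ * x n := by
      intro n hn
      rcases Nat.lt_or_ge (n : ℕ) L with hlt | hge
      · rw [show (⟨(n : ℕ) % L, Nat.mod_lt _ hL⟩ : Fin L) = ⟨(n : ℕ), hlt⟩ from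
          Fin.ext (Nat.mod_eq_of_lt hlt)]
        have e : x' n = lam ⟨(n : ℕ), hlt⟩ * x n := hlamdefx ⟨(n : ℕ), hlt⟩
        exact e
      · have hnL : (n : ℕ) = L := by omega
        rw [show (⟨(n : ℕ) % L, Nat.mod_lt _ hL⟩ : Fin L) = ⟨0, hL⟩ from
          Fin.ext (show (n : ℕ) % L = 0 by rw [hnL]; exact Nat.mod_self L)]
        have hnFin : n = ⟨L, hLltN⟩ := Fin.ext hnL
        rw [hnFin]
        exact hx'L
    have hbw : ∀ j : Fin W, (j : ℕ) ≤ 1 * L →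
        w' j = (lam ⟨(L - (j : ℕ) % L) % L, Nat.mod_lt _ hL⟩)⁻¹ * w j := by
      intro j hj
      rcases Nat.eq_zero_or_pos (j : ℕ) with h0 | h0
      · rw [show (⟨(L - (j : ℕ) % L) % L, Nat.mod_lt _ hL⟩ : Fin L) = ⟨0, hL⟩ from
          Fin.ext (show (L - (j : ℕ) % L) % L = 0 by rw [h0]; simp [Nat.mod_self])]
        have hjFin : j = ⟨0, hW0⟩ := Fin.ext h0
        rw [hjFin]
        exact hw'0
      · rcases Nat.lt_or_ge (j : ℕ) L with hlt | hge
        · have hrL : L - (j : ℕ) < L := by omega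
          obtain ⟨hlne, hwr'⟩ := pmid ⟨L - (j : ℕ), hrL⟩ (show 0 < L - (j : ℕ) by omega)
          have hjeq : (⟨L - ((⟨L - (j : ℕ), hrL⟩ : Fin L) : ℕ),
              lt_of_le_of_lt (Nat.sub_le L _) hLW⟩ : Fin W) = j :=
            Fin.ext (show L - ((⟨L - (j : ℕ), hrL⟩ : Fin L) : ℕ) = (j : ℕ) by
              simp only [Fin.val_mk]; omega)
          rw [hjeq] at hwr'
          rw [show (⟨(L - (j : ℕ) % L) % L, Nat.mod_lt _ hL⟩ : Fin L) = ⟨L - (j : ℕ), hrL⟩ from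
            Fin.ext (show (L - (j : ℕ) % L) % L = L - (j : ℕ) by
              rw [Nat.mod_eq_of_lt hlt]; exact Nat.mod_eq_of_lt hrL)]
          exact hwr'
        · have hjL : (j : ℕ) = L := by omega
          rw [show (⟨(L - (j : ℕ) % L) % L, Nat.mod_lt _ hL⟩ : Fin L) = ⟨0, hL⟩ from
            Fin.ext (show (L - (j : ℕ) % L) % L = 0 by rw [hjL]; simp [Nat.mod_self])]
          have hjFin : j = ⟨L, hLW⟩ := Fin.ext hjL
          rw [hjFin]
          exact hw'L
    -- inductive step
    have hstep : ∀ m : ℕ, 1 ≤ m → m + 1 < Mn →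
        ((∀ n : Fin N, (n : ℕ) ≤ m * L → x' n = lam ⟨(n : ℕ) % L, Nat.mod_lt _ hL⟩ * x n) ∧
         (∀ j : Fin W, (j : ℕ) ≤ m * L →
            w' j = (lam ⟨(L - (j : ℕ) % L) % L, Nat.mod_lt _ hL⟩)⁻¹ * w j)) →
        ((∀ n : Fin N, (n : ℕ) ≤ (m + 1) * L → x' n = lam ⟨(n : ℕ) % L, Nat.mod_lt _ hL⟩ * x n) ∧
         (∀ j : Fin W, (j : ℕ) ≤ (m + 1) * L →
            w' j = (lam ⟨(L - (j : ℕ) % L) % L, Nat.mod_lt _ hL⟩)⁻¹ * w j)) := by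
      rintro m hm1 hlt ⟨IHx, IHw⟩
      have hmul : (m + 1) * L = m * L + L := by ring
      have hLmL : 1 * L ≤ m * L := Nat.mul_le_mul_right L hm1
      have hleft : ∀ n : Fin N, n ∉ Ts (m + 1) → dd (m + 1) n = 0 := by
        intro n hn
        rw [hmemT] at hn
        rcases Nat.lt_or_ge ((m + 1) * L) ((n : ℕ)) with hgt | hle₁
        · exact hddzero _ _ (Or.inl hgt)
        rcases Nat.lt_or_ge ((n : ℕ) + (W - 1)) ((m + 1) * L) with hge | hle₂
        · exact hddzero _ _ (Or.inr (by omega))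
        have hnL : L ≤ (n : ℕ) := by omega
        have hnm : (n : ℕ) + L ≤ (m + 1) * L := by omega
        have hjW : (m + 1) * L - (n : ℕ) < W := by omega
        have hjmL : (m + 1) * L - (n : ℕ) ≤ m * L := by omega
        have hnmL : (n : ℕ) ≤ m * L := by omega
        have hx'n := IHx n hnmL
        have hw'j := IHw ⟨(m + 1) * L - (n : ℕ), hjW⟩ hjmL
        have hmod : ((n : ℕ) + ((m + 1) * L - (n : ℕ))) % L = 0 := by
          rw [show (n : ℕ) + ((m + 1) * L - (n : ℕ)) = (m + 1) * L from by omega]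
          exact Nat.mul_mod_left _ _
        rw [show (⟨(L - ((⟨(m + 1) * L - (n : ℕ), hjW⟩ : Fin W) : ℕ) % L) % L,
            Nat.mod_lt _ hL⟩ : Fin L) = ⟨(n : ℕ) % L, Nat.mod_lt _ hL⟩ from
          Fin.ext (mod_compl hL hmod)] at hw'j
        have hcast : ((n : ℕ) : ℤ) + (((m + 1) * L - (n : ℕ) : ℕ) : ℤ) = (((m + 1) * L : ℕ) : ℤ) := by
          exact_mod_cast congrArg (Nat.cast : ℕ → ℤ) (by omega :
            (n : ℕ) + ((m + 1) * L - (n : ℕ)) = (m + 1) * L)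
        have harg : ((m + 1 : ℕ) : ℤ) * L - ((n : ℕ) : ℤ) = (((m + 1) * L - (n : ℕ) : ℕ) : ℤ) := by
          rw [Nat.cast_mul] at hcast
          push_cast at hcast ⊢
          linarith
        have hz1 : zext w' ((((m + 1) * L - (n : ℕ) : ℕ) : ℤ)) = w' ⟨(m + 1) * L - (n : ℕ), hjW⟩ :=
          zext_coe w' ⟨(m + 1) * L - (n : ℕ), hjW⟩
        have hz2 : zext w ((((m + 1) * L - (n : ℕ) : ℕ) : ℤ)) = w ⟨(m + 1) * L - (n : ℕ), hjW⟩ :=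
          zext_coe w ⟨(m + 1) * L - (n : ℕ), hjW⟩
        simp only [hdddef]
        rw [harg, hz1, hz2, hx'n, hw'j, mul_mul_mul_comm, mul_inv_cancel₀ (hlamne _), one_mul,
          sub_self]
      have products := hPROD (m + 1) hlt hleft
      constructor
      · intro n hn
        rcases le_or_gt ((n : ℕ)) (m * L) with hle | hgt
        · exact IHx n hle
        · have hjL : (m + 1) * L - (n : ℕ) < L := by omega
          have hjW : (m + 1) * L - (n : ℕ) < W := by omega
          have hp := products n ⟨(m + 1) * L - (n : ℕ), hjW⟩ (by dsimp only; omega)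
          have hjmL : (m + 1) * L - (n : ℕ) ≤ m * L := by omega
          have hw'j := IHw ⟨(m + 1) * L - (n : ℕ), hjW⟩ hjmL
          have hmod : ((n : ℕ) + ((m + 1) * L - (n : ℕ))) % L = 0 := by
            rw [show (n : ℕ) + ((m + 1) * L - (n : ℕ)) = (m + 1) * L from by omega]
            exact Nat.mul_mod_left _ _
          rw [show (⟨(L - ((⟨(m + 1) * L - (n : ℕ), hjW⟩ : Fin W) : ℕ) % L) % L,
              Nat.mod_lt _ hL⟩ : Fin L) = ⟨(n : ℕ) % L, Nat.mod_lt _ hL⟩ from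
            Fin.ext (mod_compl hL hmod)] at hw'j
          rw [hw'j] at hp
          have hwne : w ⟨(m + 1) * L - (n : ℕ), hjW⟩ ≠ 0 := hw0 ⟨(m + 1) * L - (n : ℕ), hjL⟩
          exact solveB (hlamne _) hwne hp
      · intro j hj
        rcases le_or_gt ((j : ℕ)) (m * L) with hle | hgt
        · exact IHw j hle
        · have hnnL : (m + 1) * L - (j : ℕ) < L := by omega
          have hnnN : (m + 1) * L - (j : ℕ) < N := lt_of_lt_of_le hnnL hLN
          have hp := products ⟨(m + 1) * L - (j : ℕ), hnnN⟩ j (by dsimp only; omega)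
          have hx'n : x' ⟨(m + 1) * L - (j : ℕ), hnnN⟩
              = lam ⟨(m + 1) * L - (j : ℕ), hnnL⟩ * x ⟨(m + 1) * L - (j : ℕ), hnnN⟩ :=
            hlamdefx ⟨(m + 1) * L - (j : ℕ), hnnL⟩
          rw [hx'n] at hp
          have hxne : x ⟨(m + 1) * L - (j : ℕ), hnnN⟩ ≠ 0 := hx0 ⟨(m + 1) * L - (j : ℕ), hnnL⟩
          have hsol := solveA (hlamne _) hxne hp
          have hmod : (((m + 1) * L - (j : ℕ)) + (j : ℕ)) % L = 0 := by
            rw [show ((m + 1) * L - (j : ℕ)) + (j : ℕ) = (m + 1) * L from by omega]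
            exact Nat.mul_mod_left _ _
          rw [show (⟨(L - (j : ℕ) % L) % L, Nat.mod_lt _ hL⟩ : Fin L)
              = ⟨(m + 1) * L - (j : ℕ), hnnL⟩ from
            Fin.ext (show (L - (j : ℕ) % L) % L = (m + 1) * L - (j : ℕ) by
              rw [mod_compl hL hmod]; exact Nat.mod_eq_of_lt hnnL)]
          exact hsol
    have main : ∀ m : ℕ, 1 ≤ m → m < Mn →
        ((∀ n : Fin N, (n : ℕ) ≤ m * L → x' n = lam ⟨(n : ℕ) % L, Nat.mod_lt _ hL⟩ * x n) ∧
         (∀ j : Fin W, (j : ℕ) ≤ m * L →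
            w' j = (lam ⟨(L - (j : ℕ) % L) % L, Nat.mod_lt _ hL⟩)⁻¹ * w j)) := by
      intro m hm
      induction m, hm using Nat.le_induction with
      | base => intro _; exact ⟨hbx, hbw⟩
      | succ m hm IH =>
        intro hlt
        exact hstep m hm hlt (IH (by omega))
    have hfin := main (Mn - 1) (by omega) (by omega)
    have hmul2 : (Mn - 1) * L + L = Mn * L := by
      rw [show Mn * L = (Mn - 1 + 1) * L from by rw [show Mn - 1 + 1 = Mn from by omega]]
      ring
    refine ⟨lam, hlamne, ?_, ?_⟩
    · intro n
      exact hfin.1 n (by have := n.isLt; omega)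
    · intro j
      exact hfin.2 j (by have := j.isLt; omega)
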